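/- Let K ≥ 1 be an integer, ε > 0, and set δ_ε = (exp(ε/K) − 1)/2. Let Γ, Γ̂, ℓ, u : {1,…,K} → ℝ satisfy 0 ≤ ℓ_k ≤ Γ̂_k and Γ̂_k ≤ Γ_k ≤ u_k for every k. Suppose there is an index k* such that (Γ_{k*} − Γ̂_{k*})/(1 + Γ̂_{k*}) ≥ (Γ_k − Γ̂_k)/(1 + Γ̂_k) for all k, and u_{k*} − ℓ_{k*} ≤ 2δ_ε. Then Σ_{k=1}^K log(1 + Γ_k) − Σ_{k=1}^K log(1 + Γ̂_k) ≤ ε. -/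
import Mathlib

open Finset

/-- Lemma 3, quantitative form: if `ℓ k ≤ Γ̂ k ≤ Γ k ≤ u k`, `0 ≤ ℓ k`,
`k*` maximizes the relative gap `(Γ k − Γ̂ k)/(1 + Γ̂ k)`, and `u k* − ℓ k* ≤ 2 δ_ε`
with `δ_ε = (exp(ε/K) − 1)/2`, then `Σ log(1+Γ k) − Σ log(1+Γ̂ k) ≤ ε`. -/
theorem bnb_termination_gap (K : ℕ) (hK : 1 ≤ K) (ε : ℝ) (hε : 0 < ε)
    (Γ Γhat ℓ u : Fin K → ℝ)
    (hℓ0 : ∀ k, 0 ≤ ℓ k) (hℓhat : ∀ k, ℓ k ≤ Γhat k)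
    (hhatΓ : ∀ k, Γhat k ≤ Γ k) (hΓu : ∀ k, Γ k ≤ u k)
    (kstar : Fin K)
    (hmax : ∀ k, (Γ k - Γhat k) / (1 + Γhat k) ≤ (Γ kstar - Γhat kstar) / (1 + Γhat kstar))
    (hwidth : u kstar - ℓ kstar ≤ 2 * ((Real.exp (ε / K) - 1) / 2)) :
    (∑ k, Real.log (1 + Γ k)) - (∑ k, Real.log (1 + Γhat k)) ≤ ε := by
  have hhat0 : ∀ k, 0 ≤ Γhat k := fun k => (hℓ0 k).trans (hℓhat k)
  have hpos : ∀ k, (0:ℝ) < 1 + Γhat k := fun k => by linarith [hhat0 k]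
  have hE : u kstar - ℓ kstar ≤ Real.exp (ε / K) - 1 := by linarith
  have hrstar : (Γ kstar - Γhat kstar) / (1 + Γhat kstar) ≤ Real.exp (ε / K) - 1 := by
    rw [div_le_iff₀ (hpos kstar)]
    have h1 : Γ kstar - Γhat kstar ≤ u kstar - ℓ kstar := by
      have := hΓu kstar; have := hℓhat kstar; linarith
    have hEnn : 0 ≤ Real.exp (ε / K) - 1 := by
      have : (1:ℝ) ≤ Real.exp (ε / K) := Real.one_le_exp (by positivity)
      linarith
    calc Γ kstar - Γhat kstar ≤ Real.exp (ε / K) - 1 := h1.trans hE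
      _ ≤ (Real.exp (ε / K) - 1) * (1 + Γhat kstar) := by
          nlinarith [hhat0 kstar]
  have hterm : ∀ k, Real.log (1 + Γ k) - Real.log (1 + Γhat k) ≤ ε / K := by
    intro k
    have hr : (Γ k - Γhat k) / (1 + Γhat k) ≤ Real.exp (ε / K) - 1 :=
      (hmax k).trans hrstar
    have h2 : Γ k - Γhat k ≤ (Real.exp (ε / K) - 1) * (1 + Γhat k) := by
      rw [div_le_iff₀ (hpos k)] at hr; exact hr
    have h3 : 1 + Γ k ≤ (1 + Γhat k) * Real.exp (ε / K) := by nlinarith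
    have hΓpos : (0:ℝ) < 1 + Γ k := lt_of_lt_of_le (hpos k) (by linarith [hhatΓ k])
    have := Real.log_le_log hΓpos h3
    rwa [Real.log_mul (ne_of_gt (hpos k)) (Real.exp_ne_zero _), Real.log_exp,
      ← sub_le_iff_le_add'] at this
  calc (∑ k, Real.log (1 + Γ k)) - (∑ k, Real.log (1 + Γhat k))
      = ∑ k, (Real.log (1 + Γ k) - Real.log (1 + Γhat k)) := by rw [Finset.sum_sub_distrib]
    _ ≤ ∑ _k : Fin K, ε / K := Finset.sum_le_sum fun k _ => hterm k
    _ = ε := by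
        rw [Finset.sum_const, Finset.card_univ, Fintype.card_fin, nsmul_eq_mul]
        field_simp
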